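/- Let Y₁ ≤ … ≤ Yₙ ∈ [a,b] with Y₀ = a and Yₙ₊₁ = b, τ ∈ [0,1), and ε ≥ 0. Then the 'lower CDF shift' functional L = (1/(1−τ))·∑_{i=1}^{n}(Y_{i+1}−Y_i)·(i/n − ε − τ)⁺ − Y_{n+1} and the 'upper CDF shift' functional U = (1/(1−τ))·∑_{i=0}^{n−1}(Y_{i+1}−Y_i)·(min{1, i/n + ε} − τ)⁺ − Yₙ satisfy L ≤ U. -/
import Mathlib


open Finset

/-- deterministic monotonicity of the Thomas–Learned-Miller CVaR bounds:
for a sorted sample `a = y₀ ≤ y₁ ≤ … ≤ yₙ ≤ yₙ₊₁ = b`, `τ ∈ [0,1)` and `ε ≥ 0`,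
the lower-shift functional `L` is at most the upper-shift functional `U`. -/
theorem stmt19 (n : ℕ) (hn : 1 ≤ n) (a b : ℝ) (y : ℕ → ℝ)
    (hy0 : y 0 = a) (hyn : y (n + 1) = b)
    (hmono : ∀ i ≤ n, y i ≤ y (i + 1))
    (τ ε : ℝ) (hτ : τ ∈ Set.Ico (0:ℝ) 1) (hε : 0 ≤ ε) :
    (1 / (1 - τ)) * ∑ i ∈ Finset.Icc 1 n,
        (y (i + 1) - y i) * max ((i : ℝ) / n - ε - τ) 0 - y (n + 1) ≤
      (1 / (1 - τ)) * ∑ i ∈ Finset.range n,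
        (y (i + 1) - y i) * max (min 1 ((i : ℝ) / n + ε) - τ) 0 - y n := by
  obtain ⟨hτ0, hτ1⟩ := hτ
  have h1τ : (0:ℝ) < 1 - τ := by linarith
  have hc : 0 < 1 / (1 - τ) := by positivity
  obtain ⟨m, rfl⟩ : ∃ m, n = m + 1 := ⟨n - 1, (Nat.succ_pred_eq_of_pos hn).symm⟩
  have hnpos : (0:ℝ) < ((m : ℝ) + 1) := by positivity
  set c : ℝ := 1 / (1 - τ) with hcdef
  set f : ℕ → ℝ := fun i => (y (i + 1) - y i) * max ((i : ℝ) / (m + 1) - ε - τ) 0 with hf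
  set g : ℕ → ℝ := fun i =>
    (y (i + 1) - y i) * max (min 1 ((i : ℝ) / (m + 1) + ε) - τ) 0 with hg
  have hcast : ((m + 1 : ℕ) : ℝ) = (m : ℝ) + 1 := by push_cast; ring
  -- termwise comparison on Icc 1 m
  have hfg : ∀ i ∈ Finset.Icc 1 m, f i ≤ g i := by
    intro i hi
    simp only [Finset.mem_Icc] at hi
    have hin : (i : ℝ) ≤ (m : ℝ) + 1 := by
      have : (i : ℝ) ≤ (m : ℝ) := by exact_mod_cast hi.2
      linarith
    have h1 : (i : ℝ) / ((m : ℝ) + 1) ≤ 1 := by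
      rw [div_le_one hnpos]; exact hin
    have hmax : max ((i : ℝ) / (m + 1) - ε - τ) 0 ≤
        max (min 1 ((i : ℝ) / (m + 1) + ε) - τ) 0 := by
      apply max_le_max _ le_rfl
      have hmin : (i : ℝ) / (m + 1) - ε ≤ min 1 ((i : ℝ) / (m + 1) + ε) :=
        le_min (by linarith) (by linarith)
      linarith
    have hy := hmono i (by omega)
    exact mul_le_mul_of_nonneg_left hmax (by linarith)
  have hgnonneg : ∀ i ∈ Finset.range (m + 1), 0 ≤ g i := by
    intro i hi
    simp only [Finset.mem_range] at hi
    have hy := hmono i (by omega)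
    exact mul_nonneg (by linarith) (le_max_right _ _)
  -- sum split
  have hsplit : ∑ i ∈ Finset.Icc 1 (m + 1), f i = (∑ i ∈ Finset.Icc 1 m, f i) + f (m + 1) :=
    Finset.sum_Icc_succ_top (by omega) f
  have hsub : ∑ i ∈ Finset.Icc 1 m, g i ≤ ∑ i ∈ Finset.range (m + 1), g i := by
    apply Finset.sum_le_sum_of_subset_of_nonneg
    · intro i hi
      simp only [Finset.mem_Icc] at hi
      simp only [Finset.mem_range]
      omega
    · intro i hi _; exact hgnonneg i hi
  have hsum1 : ∑ i ∈ Finset.Icc 1 m, f i ≤ ∑ i ∈ Finset.range (m + 1), g i :=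
    le_trans (Finset.sum_le_sum hfg) hsub
  -- top term
  have htopy := hmono (m + 1) le_rfl
  have htop : c * f (m + 1) ≤ y (m + 1 + 1) - y (m + 1) := by
    have hone : ((m + 1 : ℕ) : ℝ) / ((m : ℝ) + 1) = 1 := by
      rw [hcast, div_self (ne_of_gt hnpos)]
    have hmax : max (((m + 1 : ℕ) : ℝ) / (m + 1) - ε - τ) 0 ≤ 1 - τ := by
      rw [hone]
      exact max_le (by linarith) (by linarith)
    have h1 : f (m + 1) ≤ (y (m + 1 + 1) - y (m + 1)) * (1 - τ) :=
      mul_le_mul_of_nonneg_left hmax (by linarith)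
    calc c * f (m + 1) ≤ c * ((y (m + 1 + 1) - y (m + 1)) * (1 - τ)) :=
          mul_le_mul_of_nonneg_left h1 (le_of_lt hc)
      _ = y (m + 1 + 1) - y (m + 1) := by
          rw [hcdef]; field_simp
  have hmul : c * ∑ i ∈ Finset.Icc 1 m, f i ≤ c * ∑ i ∈ Finset.range (m + 1), g i :=
    mul_le_mul_of_nonneg_left hsum1 (le_of_lt hc)
  have hLHS : c * ∑ i ∈ Finset.Icc 1 (m + 1), f i
      = c * (∑ i ∈ Finset.Icc 1 m, f i) + c * f (m + 1) := by
    rw [hsplit]; ring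
  push_cast
  calc c * (∑ i ∈ Finset.Icc 1 (m + 1), f i) - y (m + 1 + 1)
      = c * (∑ i ∈ Finset.Icc 1 m, f i) + c * f (m + 1) - y (m + 1 + 1) := by rw [hLHS]
    _ ≤ c * (∑ i ∈ Finset.range (m + 1), g i) - y (m + 1) := by linarith
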